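/- Let $\Omega$ be a finite set, $\nu$ a probability measure on $\Omega$ with $\nu(\eta) > 0$ for all $\eta$, and $T : \Omega \to \Omega$ an involution preserving $\nu$ (i.e., $T \circ T = \mathrm{id}$ and $\nu(T\eta) = \nu(\eta)$). Let $f : \Omega \to [0,\infty)$ with $\sum_\eta f(\eta)\nu(\eta) = 1$, let $g : \Omega \to \mathbb{R}$ satisfy $g(T\eta) = -g(\eta)$ and $|g| \leq 1$. Then for every $B > 0$: $\big|\sum_\eta g(\eta) f(\eta)\nu(\eta)\big| \leq \frac{B}{4}\sum_\eta \big(\sqrt{f}(T\eta) - \sqrt{f}(\eta)\big)^2 \nu(\eta) + \frac{1}{B}$. -/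

import Mathlib

set_option maxHeartbeats 1000000 in
theorem stmt_10 {Ω : Type*} [Fintype Ω] (ν : Ω → ℝ) (T : Ω → Ω)
    (hν_pos : ∀ η, 0 < ν η) (hν_sum : ∑ η, ν η = 1)
    (hT_inv : ∀ η, T (T η) = η) (hT_ν : ∀ η, ν (T η) = ν η)
    (f : Ω → ℝ) (hf_nonneg : ∀ η, 0 ≤ f η) (hf_density : ∑ η, f η * ν η = 1)
    (g : Ω → ℝ) (hg_anti : ∀ η, g (T η) = - g η) (hg_bdd : ∀ η, |g η| ≤ 1)
    (B : ℝ) (hB : 0 < B) :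
    |∑ η, g η * f η * ν η|
      ≤ B / 4 * ∑ η, (Real.sqrt (f (T η)) - Real.sqrt (f η)) ^ 2 * ν η + 1 / B := by
  have hTbij : Function.Bijective T := Function.Involutive.bijective hT_inv
  have hreindex : ∀ F : Ω → ℝ, ∑ η, F (T η) = ∑ η, F η :=
    fun F => hTbij.sum_comp F
  -- symmetrization
  have h1 : ∑ η, g η * f η * ν η = ∑ η, (- g η) * f (T η) * ν η := by
    calc ∑ η, g η * f η * ν η = ∑ η, g (T η) * f (T η) * ν (T η) :=
          (hreindex (fun η => g η * f η * ν η)).symm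
      _ = ∑ η, (- g η) * f (T η) * ν η := by
          apply Finset.sum_congr rfl
          intro η _
          rw [hg_anti, hT_ν]
  have h2S : ∑ η, g η * f η * ν η
      = ∑ η, (1/2) * (g η * (f η - f (T η)) * ν η) := by
    have h2 : 2 * ∑ η, g η * f η * ν η
        = ∑ η, g η * (f η - f (T η)) * ν η := by
      rw [two_mul]
      nth_rewrite 2 [h1]
      rw [← Finset.sum_add_distrib]
      apply Finset.sum_congr rfl
      intro η _; ring
    rw [← Finset.mul_sum, ← h2]; ring
  rw [h2S]
  have key : ∀ η, |(1/2) * (g η * (f η - f (T η)) * ν η)|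
      ≤ (B/4 * (Real.sqrt (f (T η)) - Real.sqrt (f η)) ^ 2
          + 1/B * ((f η + f (T η))/2)) * ν η := by
    intro η
    set x := Real.sqrt (f η) with hx
    set y := Real.sqrt (f (T η)) with hy
    have hx0 : 0 ≤ x := Real.sqrt_nonneg _
    have hy0 : 0 ≤ y := Real.sqrt_nonneg _
    have hx2 : x ^ 2 = f η := Real.sq_sqrt (hf_nonneg η)
    have hy2 : y ^ 2 = f (T η) := Real.sq_sqrt (hf_nonneg (T η))
    have hν : 0 < ν η := hν_pos η
    have hg : |g η| ≤ 1 := hg_bdd η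
    have hga : -1 ≤ g η ∧ g η ≤ 1 := abs_le.mp hg
    rw [abs_mul, abs_mul, abs_mul, abs_of_pos hν,
      abs_of_pos (by norm_num : (0:ℝ) < 1/2)]
    rw [← hx2, ← hy2]
    have hdiff : |x ^ 2 - y ^ 2| = |x - y| * (x + y) := by
      rw [show x ^ 2 - y ^ 2 = (x - y) * (x + y) by ring, abs_mul,
        abs_of_nonneg (by positivity : (0:ℝ) ≤ x + y)]
    rw [hdiff]
    have hmain : (1/2) * (|g η| * (|x - y| * (x + y)))
        ≤ B/4 * (y - x) ^ 2 + 1/B * ((x ^ 2 + y ^ 2)/2) := by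
      have step1 : (1/2) * (|g η| * (|x - y| * (x + y)))
          ≤ (1/2) * (|x - y| * (x + y)) := by
        have hnn : 0 ≤ |x - y| * (x + y) := by positivity
        nlinarith [abs_nonneg (g η)]
      refine step1.trans ?_
      have hu : |x - y| ^ 2 = (x - y) ^ 2 := sq_abs _
      have hB' : B * (1/B) = 1 := mul_one_div_cancel hB.ne'
      have key2 : B * ((1/2) * (|x - y| * (x + y)))
          ≤ B * (B/4 * (y - x) ^ 2) + (x ^ 2 + y ^ 2)/2 := by
        rcases abs_cases (x - y) with ⟨ha, _⟩ | ⟨ha, _⟩ <;> rw [ha] <;>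
          nlinarith [sq_nonneg (B * (x - y) - (x + y)),
            sq_nonneg (B * (x - y) + (x + y)), sq_nonneg (x - y), hB.le]
      have keq : B * (B/4 * (y - x) ^ 2) + (x ^ 2 + y ^ 2)/2
          = B * (B/4 * (y - x) ^ 2 + 1/B * ((x ^ 2 + y ^ 2)/2)) := by
        field_simp
      rw [keq] at key2
      exact le_of_mul_le_mul_left key2 hB
    calc (1/2) * (|g η| * (|x - y| * (x + y)) * ν η)
        = (1/2) * (|g η| * (|x - y| * (x + y))) * ν η := by ring
      _ ≤ (B/4 * (y - x) ^ 2 + 1/B * ((x ^ 2 + y ^ 2)/2)) * ν η :=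
          mul_le_mul_of_nonneg_right hmain hν.le
  calc |∑ η, (1/2) * (g η * (f η - f (T η)) * ν η)|
      ≤ ∑ η, |(1/2) * (g η * (f η - f (T η)) * ν η)| :=
        Finset.abs_sum_le_sum_abs _ _
    _ ≤ ∑ η, (B/4 * (Real.sqrt (f (T η)) - Real.sqrt (f η)) ^ 2
          + 1/B * ((f η + f (T η))/2)) * ν η :=
        Finset.sum_le_sum fun η _ => key η
    _ = B/4 * ∑ η, (Real.sqrt (f (T η)) - Real.sqrt (f η)) ^ 2 * ν η
        + 1/B * ∑ η, ((f η + f (T η))/2) * ν η := by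
        rw [Finset.mul_sum, Finset.mul_sum, ← Finset.sum_add_distrib]
        apply Finset.sum_congr rfl
        intro η _; ring
    _ = B/4 * ∑ η, (Real.sqrt (f (T η)) - Real.sqrt (f η)) ^ 2 * ν η + 1/B := by
        congr 1
        have hfT : ∑ η, f (T η) * ν η = 1 := by
          calc ∑ η, f (T η) * ν η = ∑ η, f (T η) * ν (T η) := by
                apply Finset.sum_congr rfl; intro η _; rw [hT_ν]
            _ = ∑ η, f η * ν η := hreindex (fun η => f η * ν η)
            _ = 1 := hf_density
        have : ∑ η, ((f η + f (T η))/2) * ν η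
            = (∑ η, f η * ν η + ∑ η, f (T η) * ν η) / 2 := by
          rw [← Finset.sum_add_distrib, Finset.sum_div]
          apply Finset.sum_congr rfl; intro η _; ring
        rw [this, hf_density, hfT]
        norm_num
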